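/- In the graph A_{k,P}(S_a, S_b), if 0 ≤ i ≤ k−1 is such that S_a(i) = 0 or S_b(i) = 0, then d(ℓ_i, u) ≤ 2P + 2 for every vertex u ∈ R ∪ {r_{k+1}}. -/

import Mathlib

/-!
Statement 7: In the graph `A_{k,P}(S_a, S_b)`, if `0 ≤ i ≤ k−1` is such that
`S_a(i) = 0` or `S_b(i) = 0`, then `d(ℓ_i, u) ≤ 2P + 2` for every vertex
`u ∈ R ∪ {r_{k+1}}`.
-/

/-- Generic graph built from "hub" vertices and "segments": each segment `s`
is a path with `len s` edges between the two hubs `ends s`, whose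
`len s - 1` internal vertices are the pairs `⟨s, t⟩`.  A segment of length 1
is just an edge between its two endpoints. -/
def segGraph {Hub Seg : Type} (ends : Seg → Hub × Hub) (len : Seg → ℕ) :
    SimpleGraph (Hub ⊕ (s : Seg) × Fin (len s - 1)) :=
  SimpleGraph.fromRel fun u v =>
    match u, v with
    | Sum.inl x, Sum.inl y => ∃ s, len s = 1 ∧ ends s = (x, y)
    | Sum.inl x, Sum.inr ⟨s, t⟩ =>
        ((ends s).1 = x ∧ (t : ℕ) = 0) ∨ ((ends s).2 = x ∧ (t : ℕ) + 2 = len s)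
    | Sum.inr ⟨s, t⟩, Sum.inl x =>
        ((ends s).1 = x ∧ (t : ℕ) = 0) ∨ ((ends s).2 = x ∧ (t : ℕ) + 2 = len s)
    | Sum.inr ⟨s, t⟩, Sum.inr ⟨s', t'⟩ =>
        s = s' ∧ ((t : ℕ) + 1 = (t' : ℕ) ∨ (t' : ℕ) + 1 = (t : ℕ))

namespace StretchDiam

/-- Hub (distinguished) vertices of the stretched diameter graph `A_{k,P}`. -/
inductive Hub (m : ℕ) : Type
  | L : Fin (2 ^ m) → Hub m
  | L' : Fin (2 ^ m) → Hub m
  | R : Fin (2 ^ m) → Hub m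
  | R' : Fin (2 ^ m) → Hub m
  | lk : Hub m
  | lk1 : Hub m
  | rk : Hub m
  | rk1 : Hub m
  | F : Fin m → Hub m
  | T : Fin m → Hub m
  | F' : Fin m → Hub m
  | T' : Fin m → Hub m

/-- Segments (paths between hubs) of `A_{k,P}`. -/
inductive Seg (m : ℕ) : Type
  | Llk : Fin (2 ^ m) → Seg m            -- ℓ_i – ℓ_k, length P
  | Rrk : Fin (2 ^ m) → Seg m            -- r_i – r_k, length P
  | lklk1 : Seg m                        -- ℓ_k – ℓ_{k+1}, length P
  | rkrk1 : Seg m                        -- r_k – r_{k+1}, length P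
  | lk1rk1 : Seg m                       -- edge ℓ_{k+1} – r_{k+1}
  | Lbit : Fin (2 ^ m) → Fin m → Seg m   -- ℓ_i – (f_j or t_j), length P
  | Rbit : Fin (2 ^ m) → Fin m → Seg m   -- r_i – (f'_j or t'_j), length P
  | FT' : Fin m → Seg m                  -- edge f_j – t'_j
  | TF' : Fin m → Seg m                  -- edge t_j – f'_j
  | Flk1 : Fin m → Seg m                 -- f_j – ℓ_{k+1}, length P
  | Tlk1 : Fin m → Seg m                 -- t_j – ℓ_{k+1}, length P
  | F'rk1 : Fin m → Seg m                -- f'_j – r_{k+1}, length P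
  | T'rk1 : Fin m → Seg m                -- t'_j – r_{k+1}, length P
  | L'L : Fin (2 ^ m) → Seg m            -- ℓ'_i – ℓ_i, length P
  | R'R : Fin (2 ^ m) → Seg m            -- r'_i – r_i, length P

open Hub Seg

/-- Endpoints of each segment. -/
def ends (m : ℕ) : Seg m → Hub m × Hub m
  | Llk i => (L i, lk)
  | Rrk i => (R i, rk)
  | lklk1 => (lk, lk1)
  | rkrk1 => (rk, rk1)
  | lk1rk1 => (lk1, rk1)
  | Lbit i j => (L i, if Nat.testBit i.val j.val then T j else F j)
  | Rbit i j => (R i, if Nat.testBit i.val j.val then T' j else F' j)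
  | FT' j => (F j, T' j)
  | TF' j => (T j, F' j)
  | Flk1 j => (F j, lk1)
  | Tlk1 j => (T j, lk1)
  | F'rk1 j => (F' j, rk1)
  | T'rk1 j => (T' j, rk1)
  | L'L i => (L' i, L i)
  | R'R i => (R' i, R i)

/-- Length of each segment: the three special edges have length 1, all other
segments are paths of length `P`. -/
def len (m P : ℕ) : Seg m → ℕ
  | lk1rk1 => 1
  | FT' _ => 1
  | TF' _ => 1
  | _ => P

/-- Vertices of `A_{k,P}`: hubs together with internal path vertices. -/
abbrev V (m P : ℕ) : Type := Hub m ⊕ (s : Seg m) × Fin (len m P s - 1)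

/-- The stretched diameter graph `A_{k,P}`. -/
def A (m P : ℕ) : SimpleGraph (V m P) := segGraph (ends m) (len m P)

/-- Extra edges depending on the input strings: an edge `ℓ_i–ℓ_{k+1}` for each
`i` with `S_a(i) = 0`, and an edge `r_i–r_{k+1}` for each `i` with `S_b(i) = 0`. -/
def extraRel (m P : ℕ) (Sa Sb : Fin (2 ^ m) → Bool) : V m P → V m P → Prop
  | Sum.inl (L i), Sum.inl lk1 => Sa i = false
  | Sum.inl (R i), Sum.inl rk1 => Sb i = false
  | _, _ => False

/-- The graph `A_{k,P}(S_a, S_b)`. -/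
def AS (m P : ℕ) (Sa Sb : Fin (2 ^ m) → Bool) : SimpleGraph (V m P) :=
  A m P ⊔ SimpleGraph.fromRel (extraRel m P Sa Sb)

section SegWalk

variable {H S : Type} (ends : S → H × H) (len : S → ℕ)

/-- Walk from the `j`-th internal vertex of segment `s` to hub `b = (ends s).2`,
of length `d + 1` where `j + d + 2 = len s`. -/
lemma seg_tail_walk (s : S) (b : H) (hb : (ends s).2 = b) :
    ∀ (d j : ℕ) (hj : j < len s - 1), j + d + 2 = len s →
    ∃ w : (segGraph ends len).Walk (Sum.inr ⟨s, ⟨j, hj⟩⟩) (Sum.inl b),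
      w.length = d + 1 := by
  intro d
  induction d with
  | zero =>
    intro j hj hd
    have e : (segGraph ends len).Adj (Sum.inr ⟨s, ⟨j, hj⟩⟩) (Sum.inl b) :=
      ⟨by simp, Or.inl (Or.inr ⟨hb, by simpa using hd⟩)⟩
    exact ⟨SimpleGraph.Walk.cons e SimpleGraph.Walk.nil, by simp⟩
  | succ d ih =>
    intro j hj hd
    have hj1 : j + 1 < len s - 1 := by omega
    obtain ⟨w, hw⟩ := ih (j + 1) hj1 (by omega)
    have e : (segGraph ends len).Adj (Sum.inr ⟨s, ⟨j, hj⟩⟩) (Sum.inr ⟨s, ⟨j + 1, hj1⟩⟩) := by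
      refine ⟨?_, Or.inl ⟨rfl, Or.inl rfl⟩⟩
      intro hc
      simp only [Sum.inr.injEq, Sigma.mk.inj_iff, heq_eq_eq, Fin.mk.injEq] at hc
      omega
    exact ⟨SimpleGraph.Walk.cons e w, by simp [hw]⟩

/-- Each segment gives a walk of length `len s` between its two endpoints. -/
lemma seg_walk (s : S) (a b : H) (hab : ends s = (a, b)) (h1 : 1 ≤ len s)
    (hne : a ≠ b) :
    ∃ w : (segGraph ends len).Walk (Sum.inl a) (Sum.inl b), w.length = len s := by
  have ha : (ends s).1 = a := by rw [hab]
  have hb : (ends s).2 = b := by rw [hab]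
  rcases Nat.lt_or_ge (len s) 2 with h2 | h2
  · have h1' : len s = 1 := by omega
    have e : (segGraph ends len).Adj (Sum.inl a) (Sum.inl b) :=
      ⟨by simpa using hne, Or.inl ⟨s, h1', hab⟩⟩
    exact ⟨SimpleGraph.Walk.cons e SimpleGraph.Walk.nil, by simp [h1']⟩
  · have hj : 0 < len s - 1 := by omega
    obtain ⟨w, hw⟩ := seg_tail_walk ends len s b hb (len s - 2) 0 hj (by omega)
    have e : (segGraph ends len).Adj (Sum.inl a) (Sum.inr ⟨s, ⟨0, hj⟩⟩) :=
      ⟨by simp, Or.inl (Or.inl ⟨ha, rfl⟩)⟩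
    refine ⟨SimpleGraph.Walk.cons e w, ?_⟩
    rw [SimpleGraph.Walk.length_cons, hw]
    omega

end SegWalk

/-- A walk between hubs along a segment, in the graph `AS`. -/
lemma as_seg_walk (m P : ℕ) (Sa Sb : Fin (2 ^ m) → Bool) (s : Seg m) (a b : Hub m)
    (hab : ends m s = (a, b)) (h1 : 1 ≤ len m P s) (hne : a ≠ b) :
    ∃ w : (AS m P Sa Sb).Walk (Sum.inl a) (Sum.inl b), w.length = len m P s := by
  obtain ⟨w, hw⟩ := seg_walk (ends m) (len m P) s a b hab h1 hne
  exact ⟨w.mapLe (show segGraph (ends m) (len m P) ≤ AS m P Sa Sb from le_sup_left), by rw [SimpleGraph.Walk.length_mapLe]; exact hw⟩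

/-- A walk of length `2P + 1` from `ℓ_i` to `r_{k+1}`, unconditionally. -/
lemma walk_L_rk1 (m P : ℕ) (hm : 1 ≤ m) (hP : 1 ≤ P) (Sa Sb : Fin (2 ^ m) → Bool)
    (i : Fin (2 ^ m)) :
    ∃ w : (AS m P Sa Sb).Walk (Sum.inl (L i)) (Sum.inl rk1),
      w.length = 2 * P + 1 := by
  set b : Fin m := ⟨0, hm⟩
  by_cases hbit : Nat.testBit i.val b.val
  · obtain ⟨w1, hw1⟩ := as_seg_walk m P Sa Sb (Seg.Lbit i b) (L i) (T b)
      (by simp [ends, hbit]) (by simpa [len] using hP) (by simp)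
    obtain ⟨w2, hw2⟩ := as_seg_walk m P Sa Sb (Seg.TF' b) (T b) (F' b)
      rfl (by simp [len]) (by simp)
    obtain ⟨w3, hw3⟩ := as_seg_walk m P Sa Sb (Seg.F'rk1 b) (F' b) rk1
      rfl (by simpa [len] using hP) (by simp)
    refine ⟨(w1.append w2).append w3, ?_⟩
    rw [SimpleGraph.Walk.length_append, SimpleGraph.Walk.length_append, hw1, hw2, hw3]
    simp only [len]
    omega
  · obtain ⟨w1, hw1⟩ := as_seg_walk m P Sa Sb (Seg.Lbit i b) (L i) (F b)
      (by simp [ends, hbit]) (by simpa [len] using hP) (by simp)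
    obtain ⟨w2, hw2⟩ := as_seg_walk m P Sa Sb (Seg.FT' b) (F b) (T' b)
      rfl (by simp [len]) (by simp)
    obtain ⟨w3, hw3⟩ := as_seg_walk m P Sa Sb (Seg.T'rk1 b) (T' b) rk1
      rfl (by simpa [len] using hP) (by simp)
    refine ⟨(w1.append w2).append w3, ?_⟩
    rw [SimpleGraph.Walk.length_append, SimpleGraph.Walk.length_append, hw1, hw2, hw3]
    simp only [len]
    omega

/-- A walk of length `2P + 1` from `ℓ_i` to `r_j` when `i ≠ j`. -/
lemma walk_L_R (m P : ℕ) (hP : 1 ≤ P) (Sa Sb : Fin (2 ^ m) → Bool)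
    (i j : Fin (2 ^ m)) (hij : i ≠ j) :
    ∃ w : (AS m P Sa Sb).Walk (Sum.inl (L i)) (Sum.inl (R j)),
      w.length = 2 * P + 1 := by
  -- find a differing bit below m
  obtain ⟨b, hblt, hbne⟩ : ∃ b : ℕ, b < m ∧
      Nat.testBit i.val b ≠ Nat.testBit j.val b := by
    have hne : i.val ≠ j.val := fun hc => hij (Fin.ext hc)
    by_contra hc
    push_neg at hc
    refine hne (Nat.eq_of_testBit_eq fun b => ?_)
    rcases Nat.lt_or_ge b m with hb | hb
    · exact hc b hb
    · have h1 : Nat.testBit i.val b = false :=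
        Nat.testBit_lt_two_pow (lt_of_lt_of_le i.isLt (Nat.pow_le_pow_right (by norm_num) hb))
      have h2 : Nat.testBit j.val b = false :=
        Nat.testBit_lt_two_pow (lt_of_lt_of_le j.isLt (Nat.pow_le_pow_right (by norm_num) hb))
      rw [h1, h2]
  set bf : Fin m := ⟨b, hblt⟩
  by_cases hbit : Nat.testBit i.val b
  · have hjbit : Nat.testBit j.val b = false := by
      cases hj : Nat.testBit j.val b
      · rfl
      · exact absurd (by rw [hbit, hj]) hbne
    obtain ⟨w1, hw1⟩ := as_seg_walk m P Sa Sb (Seg.Lbit i bf) (L i) (T bf)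
      (by simp [ends, hbit, bf]) (by simpa [len] using hP) (by simp)
    obtain ⟨w2, hw2⟩ := as_seg_walk m P Sa Sb (Seg.TF' bf) (T bf) (F' bf)
      rfl (by simp [len]) (by simp)
    obtain ⟨w3, hw3⟩ := as_seg_walk m P Sa Sb (Seg.Rbit j bf) (R j) (F' bf)
      (by simp [ends, hjbit, bf]) (by simpa [len] using hP) (by simp)
    refine ⟨(w1.append w2).append w3.reverse, ?_⟩
    rw [SimpleGraph.Walk.length_append, SimpleGraph.Walk.length_append,
      SimpleGraph.Walk.length_reverse, hw1, hw2, hw3]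
    simp only [len]
    omega
  · have hbit' : Nat.testBit i.val b = false := by simpa using hbit
    have hjbit : Nat.testBit j.val b = true := by
      cases hj : Nat.testBit j.val b
      · exact absurd (by rw [hbit', hj]) hbne
      · rfl
    obtain ⟨w1, hw1⟩ := as_seg_walk m P Sa Sb (Seg.Lbit i bf) (L i) (F bf)
      (by simp [ends, hbit', bf]) (by simpa [len] using hP) (by simp)
    obtain ⟨w2, hw2⟩ := as_seg_walk m P Sa Sb (Seg.FT' bf) (F bf) (T' bf)
      rfl (by simp [len]) (by simp)
    obtain ⟨w3, hw3⟩ := as_seg_walk m P Sa Sb (Seg.Rbit j bf) (R j) (T' bf)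
      (by simp [ends, hjbit, bf]) (by simpa [len] using hP) (by simp)
    refine ⟨(w1.append w2).append w3.reverse, ?_⟩
    rw [SimpleGraph.Walk.length_append, SimpleGraph.Walk.length_append,
      SimpleGraph.Walk.length_reverse, hw1, hw2, hw3]
    simp only [len]
    omega

theorem statement7 (m P : ℕ) (hm : 1 ≤ m) (hP : 1 ≤ P)
    (Sa Sb : Fin (2 ^ m) → Bool) (i : Fin (2 ^ m))
    (h : Sa i = false ∨ Sb i = false) :
    ∀ u : V m P, ((∃ j : Fin (2 ^ m), u = Sum.inl (R j)) ∨ u = Sum.inl rk1) →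
      (AS m P Sa Sb).dist (Sum.inl (L i)) u ≤ 2 * P + 2 := by
  rintro u (⟨j, rfl⟩ | rfl)
  · by_cases hij : i = j
    · subst hij
      rcases h with ha | hb
      · -- extra edge ℓ_i–ℓ_{k+1}, edge ℓ_{k+1}–r_{k+1}, then down to r_k and r_i
        have e1 : (AS m P Sa Sb).Adj (Sum.inl (L i)) (Sum.inl lk1) :=
          (SimpleGraph.sup_adj _ _ _ _).mpr (Or.inr ⟨by simp, Or.inl ha⟩)
        obtain ⟨w2, hw2⟩ := as_seg_walk m P Sa Sb Seg.lk1rk1 lk1 rk1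
          rfl (by simp [len]) (by simp)
        obtain ⟨w3, hw3⟩ := as_seg_walk m P Sa Sb Seg.rkrk1 rk rk1
          rfl (by simpa [len] using hP) (by simp)
        obtain ⟨w4, hw4⟩ := as_seg_walk m P Sa Sb (Seg.Rrk i) (R i) rk
          rfl (by simpa [len] using hP) (by simp)
        have := (AS m P Sa Sb).dist_le
          (SimpleGraph.Walk.cons e1 ((w2.append w3.reverse).append w4.reverse))
        rw [SimpleGraph.Walk.length_cons, SimpleGraph.Walk.length_append,
          SimpleGraph.Walk.length_append, SimpleGraph.Walk.length_reverse,
          SimpleGraph.Walk.length_reverse, hw2, hw3, hw4] at this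
        simp only [len] at this
        exact this.trans (by omega)
      · -- to r_{k+1} in 2P+1 steps, then the extra edge r_{k+1}–r_i
        obtain ⟨w1, hw1⟩ := walk_L_rk1 m P hm hP Sa Sb i
        have e2 : (AS m P Sa Sb).Adj (Sum.inl rk1) (Sum.inl (R i)) :=
          (SimpleGraph.sup_adj _ _ _ _).mpr (Or.inr ⟨by simp, Or.inr hb⟩)
        have := (AS m P Sa Sb).dist_le
          (w1.append (SimpleGraph.Walk.cons e2 SimpleGraph.Walk.nil))
        simp only [SimpleGraph.Walk.length_append, SimpleGraph.Walk.length_cons,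
          SimpleGraph.Walk.length_nil, hw1] at this
        omega
    · obtain ⟨w, hw⟩ := walk_L_R m P hP Sa Sb i j hij
      have := (AS m P Sa Sb).dist_le w
      omega
  · obtain ⟨w, hw⟩ := walk_L_rk1 m P hm hP Sa Sb i
    have := (AS m P Sa Sb).dist_le w
    omega

end StretchDiam
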